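/- Let F : [0,T] → [0,∞) be continuous and suppose there exist λ > 1 and c > 0 such that for all 0 ≤ s ≤ t ≤ T one has ∫_s^t F(s₁)^λ ds₁ ≤ c·(F(s)+1). Then there exists N ≥ 1 and times t₀ = 0 < t₁ < ⋯ < t_N = T such that for all 0 ≤ n ≤ N−1, F(t_n) ≤ 1 + 2^{λ/(λ−1)} · (c/(1 − 2^{−(λ−1)}))^{1/(λ−1)} · t_{n+1}^{−1/(λ−1)}. -/

import Mathlib

open MeasureTheory

noncomputable def Dconst (c lam : ℝ) : ℝ :=
  (2:ℝ) ^ (lam / (lam - 1)) * (c / (1 - (2:ℝ) ^ (-(lam - 1)))) ^ (1 / (lam - 1))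

/-- On any subinterval there is a point where `F ^ lam` is at most its average bound. -/
lemma exists_small_point
    (T c lam : ℝ) (hT : 0 < T) (hlam : 1 < lam)
    (F : ℝ → ℝ) (hFcont : ContinuousOn F (Set.Icc 0 T))
    (hineq : ∀ s t : ℝ, 0 ≤ s → s ≤ t → t ≤ T →
      (∫ x in Set.Ioc s t, F x ^ lam) ≤ c * (F s + 1))
    (s h : ℝ) (hs : 0 ≤ s) (hh : 0 < h) (hsh : s + h ≤ T) :
    ∃ u ∈ Set.Ioc s (s + h), F u ^ lam ≤ c * (F s + 1) / h := by
  by_contra hcon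
  push_neg at hcon
  set M : ℝ := c * (F s + 1) / h with hM
  have hsub : Set.Icc s (s + h) ⊆ Set.Icc 0 T :=
    Set.Icc_subset_Icc hs hsh
  have hcg : ContinuousOn (fun u => F u ^ lam - M) (Set.Icc s (s + h)) := by
    apply ContinuousOn.sub _ continuousOn_const
    apply ContinuousOn.rpow_const (hFcont.mono hsub)
    intro x _
    exact Or.inr (by linarith)
  have hle : s ≤ s + h := by linarith
  have hint : IntervalIntegrable (fun u => F u ^ lam - M) volume s (s + h) := by
    apply ContinuousOn.intervalIntegrable
    rwa [Set.uIcc_of_le hle]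
  have hpos : 0 < ∫ x in s..(s + h), (F x ^ lam - M) := by
    apply intervalIntegral.intervalIntegral_pos_of_pos_on hint _ (by linarith)
    intro x hx
    have := hcon x ⟨hx.1, hx.2.le⟩
    linarith
  have hFint : IntervalIntegrable (fun u => F u ^ lam) volume s (s + h) := by
    have := hint.add (intervalIntegrable_const (c := M))
    simpa using this
  rw [intervalIntegral.integral_sub hFint (intervalIntegrable_const)] at hpos
  rw [intervalIntegral.integral_const] at hpos
  rw [intervalIntegral.integral_of_le hle] at hpos
  have hIoc : (∫ x in Set.Ioc s (s + h), F x ^ lam) ≤ c * (F s + 1) :=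
    hineq s (s + h) hs hle (by linarith)
  have : (s + h - s) • M = c * (F s + 1) := by
    rw [smul_eq_mul, hM]
    field_simp
    ring
  rw [this] at hpos
  linarith

/-- Pure computation: `e < T` in case B. -/
lemma lemD (T lam D x : ℝ) (hT : 0 < T) (hlam : 1 < lam) (hD : 0 < D) (hx1 : 1 < x)
    (hB : D * T ^ (-(1 / (lam - 1))) < x - 1) :
    (D / (x - 1)) ^ (lam - 1) < T := by
  have hx1' : 0 < x - 1 := by linarith
  have hTα : (0:ℝ) < T ^ (1 / (lam - 1)) := Real.rpow_pos_of_pos hT _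
  have hTneg : T ^ (-(1 / (lam - 1))) = (T ^ (1 / (lam - 1)))⁻¹ := Real.rpow_neg hT.le _
  rw [hTneg] at hB
  have h3 : D * (T ^ (1 / (lam - 1)))⁻¹ * T ^ (1 / (lam - 1))
      < (x - 1) * T ^ (1 / (lam - 1)) := mul_lt_mul_of_pos_right hB hTα
  rw [mul_assoc, inv_mul_cancel₀ hTα.ne', mul_one] at h3
  have h1 : D / (x - 1) < T ^ (1 / (lam - 1)) := by
    rw [div_lt_iff₀ hx1']
    linarith [h3]
  calc (D / (x - 1)) ^ (lam - 1) < (T ^ (1 / (lam - 1))) ^ (lam - 1) :=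
        Real.rpow_lt_rpow (le_of_lt (div_pos hD hx1')) h1 (by linarith)
    _ = T := by
        rw [← Real.rpow_mul hT.le]
        rw [one_div, inv_mul_cancel₀ (by linarith : lam - 1 ≠ 0), Real.rpow_one]

/-- Pure computation: the average bound is at most `((x+1)/2)^lam`. -/
lemma lemB (c lam D γ x : ℝ) (hlam : 1 < lam) (hc : 0 < c) (hγpos : 0 < γ) (hγlt : γ < 1)
    (hx1 : 1 < x) (hD : 0 < D) (hDa : D ^ (lam - 1) = 2 ^ lam * (c / (1 - γ))) :
    c * (x + 1) / ((1 - γ) * (D / (x - 1)) ^ (lam - 1)) ≤ ((x + 1) / 2) ^ lam := by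
  have hx1' : 0 < x - 1 := by linarith
  have hx2 : (0:ℝ) < x + 1 := by linarith
  have h2lam : (0:ℝ) < (2:ℝ) ^ lam := Real.rpow_pos_of_pos two_pos _
  have hxa : (0:ℝ) < (x - 1) ^ (lam - 1) := Real.rpow_pos_of_pos hx1' _
  have hea : (D / (x - 1)) ^ (lam - 1) = D ^ (lam - 1) / (x - 1) ^ (lam - 1) :=
    Real.div_rpow hD.le hx1'.le _
  have hstep : c * (x + 1) / ((1 - γ) * (D / (x - 1)) ^ (lam - 1))
      = (x + 1) * (x - 1) ^ (lam - 1) / 2 ^ lam := by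
    rw [hea, hDa]
    have h1γ : (1:ℝ) - γ ≠ 0 := by linarith
    field_simp
  rw [hstep]
  have hmon : (x - 1) ^ (lam - 1) ≤ (x + 1) ^ (lam - 1) :=
    Real.rpow_le_rpow hx1'.le (by linarith) (by linarith)
  calc (x + 1) * (x - 1) ^ (lam - 1) / 2 ^ lam
      ≤ (x + 1) * (x + 1) ^ (lam - 1) / 2 ^ lam := by
        gcongr
    _ = ((x + 1) / 2) ^ lam := by
        rw [Real.div_rpow hx2.le (by norm_num)]
        congr 1
        nth_rewrite 1 [← Real.rpow_one (x + 1)]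
        rw [← Real.rpow_add hx2]
        ring_nf
  
/-- Pure computation: first-step bound `x ≤ 1 + D u^(-α)` for `u ≤ e`. -/
lemma lemA (lam D x u : ℝ) (hlam : 1 < lam) (hD : 0 < D) (hx1 : 1 < x)
    (hu0 : 0 < u) (hue : u ≤ (D / (x - 1)) ^ (lam - 1)) :
    x ≤ 1 + D * u ^ (-(1 / (lam - 1))) := by
  have hx1' : 0 < x - 1 := by linarith
  have hdiv : 0 < D / (x - 1) := div_pos hD hx1'
  have h1 : u ^ (1 / (lam - 1)) ≤ D / (x - 1) := by
    calc u ^ (1 / (lam - 1)) ≤ ((D / (x - 1)) ^ (lam - 1)) ^ (1 / (lam - 1)) :=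
          Real.rpow_le_rpow hu0.le hue (le_of_lt (by apply one_div_pos.mpr; linarith))
      _ = D / (x - 1) := by
          rw [← Real.rpow_mul hdiv.le]
          rw [mul_one_div, div_self (by linarith : lam - 1 ≠ 0), Real.rpow_one]
  have huα : (0:ℝ) < u ^ (1 / (lam - 1)) := Real.rpow_pos_of_pos hu0 _
  have h2 : (x - 1) * u ^ (1 / (lam - 1)) ≤ D := by
    calc (x - 1) * u ^ (1 / (lam - 1)) ≤ (x - 1) * (D / (x - 1)) :=
          mul_le_mul_of_nonneg_left h1 hx1'.le
      _ = D := by field_simp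
  have h3 : u ^ (-(1 / (lam - 1))) = (u ^ (1 / (lam - 1)))⁻¹ := Real.rpow_neg hu0.le _
  rw [h3]
  have h4 : x - 1 ≤ D / u ^ (1 / (lam - 1)) := (le_div_iff₀ huα).mpr h2
  rw [div_eq_mul_inv] at h4
  linarith

/-- Pure computation: invariant propagation. -/
lemma lemC (lam D x x' u : ℝ) (hlam : 1 < lam) (hD : 0 < D) (hx1 : 1 < x) (hx'1 : 1 < x')
    (hhalf : x' ≤ (x + 1) / 2) (hue : u ≤ (D / (x - 1)) ^ (lam - 1)) :
    u ≤ (2:ℝ) ^ (-(lam - 1)) * (D / (x' - 1)) ^ (lam - 1) := by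
  have hx1' : 0 < x - 1 := by linarith
  have hx'1' : 0 < x' - 1 := by linarith
  have hdiv : 0 < D / (x - 1) := div_pos hD hx1'
  have hmono : (2:ℝ) * (D / (x - 1)) ≤ D / (x' - 1) := by
    rw [le_div_iff₀ hx'1']
    have h5 : x' - 1 ≤ (x - 1) / 2 := by linarith
    calc 2 * (D / (x - 1)) * (x' - 1) ≤ 2 * (D / (x - 1)) * ((x - 1) / 2) := by
          apply mul_le_mul_of_nonneg_left h5
          positivity
      _ = D := by field_simp
  have h2 : (2 * (D / (x - 1))) ^ (lam - 1) ≤ (D / (x' - 1)) ^ (lam - 1) :=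
    Real.rpow_le_rpow (by positivity) hmono (by linarith)
  have h3 : (2 * (D / (x - 1))) ^ (lam - 1)
      = 2 ^ (lam - 1) * (D / (x - 1)) ^ (lam - 1) :=
    Real.mul_rpow (by norm_num) hdiv.le
  have h4 : (2:ℝ) ^ (-(lam - 1)) * ((2:ℝ) ^ (lam - 1) * (D / (x - 1)) ^ (lam - 1))
      = (D / (x - 1)) ^ (lam - 1) := by
    rw [← mul_assoc, ← Real.rpow_add two_pos]
    simp
  have hγpos : (0:ℝ) < (2:ℝ) ^ (-(lam - 1)) := Real.rpow_pos_of_pos two_pos _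
  calc u ≤ (D / (x - 1)) ^ (lam - 1) := hue
    _ = (2:ℝ) ^ (-(lam - 1)) * ((2:ℝ) ^ (lam - 1) * (D / (x - 1)) ^ (lam - 1)) := h4.symm
    _ ≤ (2:ℝ) ^ (-(lam - 1)) * (D / (x' - 1)) ^ (lam - 1) := by
        apply mul_le_mul_of_nonneg_left _ hγpos.le
        rw [← h3]
        exact h2

lemma aux_chain
    (T c lam : ℝ) (hT : 0 < T) (hc : 0 < c) (hlam : 1 < lam)
    (F : ℝ → ℝ) (hFcont : ContinuousOn F (Set.Icc 0 T))
    (hFnonneg : ∀ t ∈ Set.Icc (0:ℝ) T, 0 ≤ F t)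
    (hineq : ∀ s t : ℝ, 0 ≤ s → s ≤ t → t ≤ T →
      (∫ x in Set.Ioc s t, F x ^ lam) ≤ c * (F s + 1)) :
    ∀ m : ℕ, ∀ s : ℝ, 0 ≤ s → s < T →
      F s - 1 ≤ 2 ^ m * (Dconst c lam * T ^ (-(1 / (lam - 1)))) →
      (1 + Dconst c lam * T ^ (-(1 / (lam - 1))) < F s →
        s ≤ (2:ℝ) ^ (-(lam - 1)) * (Dconst c lam / (F s - 1)) ^ (lam - 1)) →
      ∃ N : ℕ, 1 ≤ N ∧ ∃ tt : ℕ → ℝ, tt 0 = s ∧ tt N = T ∧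
        (∀ n < N, tt n < tt (n + 1)) ∧
        (∀ n < N, F (tt n) ≤ 1 + Dconst c lam * tt (n + 1) ^ (-(1 / (lam - 1)))) := by
  have ha : 0 < lam - 1 := by linarith
  have hγpos : (0:ℝ) < (2:ℝ) ^ (-(lam - 1)) := Real.rpow_pos_of_pos two_pos _
  have hγlt : (2:ℝ) ^ (-(lam - 1)) < 1 :=
    Real.rpow_lt_one_of_one_lt_of_neg one_lt_two (by linarith)
  have hK : (0:ℝ) < c / (1 - (2:ℝ) ^ (-(lam - 1))) := by
    apply div_pos hc; linarith
  have hD : 0 < Dconst c lam := by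
    apply mul_pos (Real.rpow_pos_of_pos two_pos _) (Real.rpow_pos_of_pos hK _)
  have hDa : Dconst c lam ^ (lam - 1)
      = 2 ^ lam * (c / (1 - (2:ℝ) ^ (-(lam - 1)))) := by
    unfold Dconst
    rw [Real.mul_rpow (by positivity) (by positivity),
      ← Real.rpow_mul (by norm_num : (0:ℝ) ≤ 2), ← Real.rpow_mul hK.le]
    rw [div_mul_cancel₀ _ (by linarith : lam - 1 ≠ 0),
      one_div, inv_mul_cancel₀ (by linarith : lam - 1 ≠ 0), Real.rpow_one]
  -- the "case A" construction: jump directly to T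
  have caseA : ∀ s : ℝ, 0 ≤ s → s < T →
      F s ≤ 1 + Dconst c lam * T ^ (-(1 / (lam - 1))) →
      ∃ N : ℕ, 1 ≤ N ∧ ∃ tt : ℕ → ℝ, tt 0 = s ∧ tt N = T ∧
        (∀ n < N, tt n < tt (n + 1)) ∧
        (∀ n < N, F (tt n) ≤ 1 + Dconst c lam * tt (n + 1) ^ (-(1 / (lam - 1)))) := by
    intro s hs0 hsT hA
    refine ⟨1, le_refl 1, fun n => if n = 0 then s else T, by simp, by simp, ?_, ?_⟩
    · intro n hn
      interval_cases n
      simpa using hsT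
    · intro n hn
      interval_cases n
      simpa using hA
  intro m
  induction m with
  | zero =>
    intro s hs0 hsT hcount _
    apply caseA s hs0 hsT
    rw [pow_zero, one_mul] at hcount
    linarith
  | succ m ih =>
    intro s hs0 hsT hcount hinv
    by_cases hA : F s ≤ 1 + Dconst c lam * T ^ (-(1 / (lam - 1)))
    · exact caseA s hs0 hsT hA
    push_neg at hA
    -- case B
    have hDT : 0 < Dconst c lam * T ^ (-(1 / (lam - 1))) :=
      mul_pos hD (Real.rpow_pos_of_pos hT _)
    have hx1 : (1:ℝ) < F s := by nlinarith
    have hx1' : (0:ℝ) < F s - 1 := by linarith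
    have hepos : 0 < (Dconst c lam / (F s - 1)) ^ (lam - 1) :=
      Real.rpow_pos_of_pos (div_pos hD hx1') _
    have heT : (Dconst c lam / (F s - 1)) ^ (lam - 1) < T :=
      lemD T lam (Dconst c lam) (F s) hT hlam hD hx1 (by linarith)
    have hsle : s ≤ (2:ℝ) ^ (-(lam - 1)) * (Dconst c lam / (F s - 1)) ^ (lam - 1) :=
      hinv hA
    set e := (Dconst c lam / (F s - 1)) ^ (lam - 1) with he
    have hhpos : 0 < (1 - (2:ℝ) ^ (-(lam - 1))) * e := mul_pos (by linarith) hepos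
    have hshe : s + (1 - (2:ℝ) ^ (-(lam - 1))) * e ≤ e := by nlinarith
    obtain ⟨u, hu, hub⟩ := exists_small_point T c lam hT hlam F hFcont hineq s
      ((1 - (2:ℝ) ^ (-(lam - 1))) * e) hs0 hhpos (by linarith)
    have hus : s < u := hu.1
    have hue : u ≤ e := le_trans hu.2 hshe
    have huT : u < T := lt_of_le_of_lt hue heT
    have hu0 : 0 < u := lt_of_le_of_lt hs0 hus
    have hFu0 : 0 ≤ F u := hFnonneg u ⟨hu0.le, huT.le⟩
    -- F u ≤ (F s + 1)/2
    have hhalf : F u ≤ (F s + 1) / 2 := by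
      have hkey := lemB c lam (Dconst c lam) ((2:ℝ) ^ (-(lam - 1))) (F s)
        hlam hc hγpos hγlt hx1 hD hDa
      rw [← he] at hkey
      have h1 : F u ^ lam ≤ ((F s + 1) / 2) ^ lam := le_trans hub hkey
      exact (Real.rpow_le_rpow_iff hFu0 (by linarith) (by linarith)).mp h1
    -- counting hypothesis for u
    have hcount' : F u - 1 ≤ 2 ^ m * (Dconst c lam * T ^ (-(1 / (lam - 1)))) := by
      have : F u - 1 ≤ (F s - 1) / 2 := by linarith
      rw [pow_succ] at hcount
      nlinarith [hDT]
    -- invariant for u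
    have hinv' : 1 + Dconst c lam * T ^ (-(1 / (lam - 1))) < F u →
        u ≤ (2:ℝ) ^ (-(lam - 1)) * (Dconst c lam / (F u - 1)) ^ (lam - 1) := by
      intro hBu
      have hFu1 : (1:ℝ) < F u := by nlinarith
      exact lemC lam (Dconst c lam) (F s) (F u) u hlam hD hx1 hFu1 hhalf hue
    obtain ⟨N', hN1, tt', ht0, htN, htmono, htbd⟩ := ih u hu0.le huT hcount' hinv'
    have hfirst : F s ≤ 1 + Dconst c lam * u ^ (-(1 / (lam - 1))) :=
      lemA lam (Dconst c lam) (F s) u hlam hD hx1 hu0 hue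
    refine ⟨N' + 1, by omega, fun n => if n = 0 then s else tt' (n - 1), by simp, ?_, ?_, ?_⟩
    · simpa using htN
    · intro n hn
      match n with
      | 0 => simpa [ht0] using hus
      | Nat.succ k =>
        have hk : k < N' := by omega
        simpa using htmono k hk
    · intro n hn
      match n with
      | 0 => simpa [ht0] using hfirst
      | Nat.succ k =>
        have hk : k < N' := by omega
        simpa using htbd k hk

/-- Mourrat–Weber type comparison test (Proposition A.2 of the paper). -/
theorem comparison_test
    (T c lam : ℝ) (hT : 0 < T) (hc : 0 < c) (hlam : 1 < lam)
    (F : ℝ → ℝ) (hFcont : ContinuousOn F (Set.Icc 0 T))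
    (hFnonneg : ∀ t ∈ Set.Icc (0:ℝ) T, 0 ≤ F t)
    (hineq : ∀ s t : ℝ, 0 ≤ s → s ≤ t → t ≤ T →
      (∫ x in Set.Ioc s t, F x ^ lam) ≤ c * (F s + 1)) :
    ∃ N : ℕ, 1 ≤ N ∧ ∃ tt : ℕ → ℝ, tt 0 = 0 ∧ tt N = T ∧
      (∀ n < N, tt n < tt (n + 1)) ∧
      (∀ n < N, F (tt n) ≤ 1 + (2:ℝ) ^ (lam / (lam - 1)) *
        (c / (1 - (2:ℝ) ^ (-(lam - 1)))) ^ (1 / (lam - 1)) *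
        tt (n + 1) ^ (-(1 / (lam - 1)))) := by
  have hγlt : (2:ℝ) ^ (-(lam - 1)) < 1 :=
    Real.rpow_lt_one_of_one_lt_of_neg one_lt_two (by linarith)
  have hK : (0:ℝ) < c / (1 - (2:ℝ) ^ (-(lam - 1))) := by
    apply div_pos hc; linarith
  have hD : 0 < Dconst c lam :=
    mul_pos (Real.rpow_pos_of_pos two_pos _) (Real.rpow_pos_of_pos hK _)
  have hDT : 0 < Dconst c lam * T ^ (-(1 / (lam - 1))) :=
    mul_pos hD (Real.rpow_pos_of_pos hT _)
  obtain ⟨m, hm⟩ := pow_unbounded_of_one_lt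
    ((F 0 - 1) / (Dconst c lam * T ^ (-(1 / (lam - 1))))) (one_lt_two (α := ℝ))
  have hcount : F 0 - 1 ≤ 2 ^ m * (Dconst c lam * T ^ (-(1 / (lam - 1)))) := by
    rw [div_lt_iff₀ hDT] at hm
    linarith
  obtain ⟨N, hN, tt, h0, hTT, hmono, hbd⟩ :=
    aux_chain T c lam hT hc hlam F hFcont hFnonneg hineq m 0 le_rfl hT hcount
      (by intro h
          have h0 : (0:ℝ) < F 0 - 1 := by nlinarith
          positivity)
  refine ⟨N, hN, tt, h0, hTT, hmono, ?_⟩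
  intro n hn
  have h1 := hbd n hn
  rw [Dconst] at h1
  linarith [h1]
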